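/- For every d-regular graph G with d ≥ 2, the star chromatic number of G satisfies χ_s(G) ≥ ⌈(d+4)/2⌉. -/
import Mathlib

open Finset

/-- A star colouring: a proper colouring with no bicoloured 4-vertex path. -/
def IsStarColoring {V : Type*} {α : Type*} (G : SimpleGraph V) (f : V → α) : Prop :=
  (∀ ⦃u v : V⦄, G.Adj u v → f u ≠ f v) ∧
  ∀ ⦃a b c d : V⦄, G.Adj a b → G.Adj b c → G.Adj c d →
    a ≠ c → a ≠ d → b ≠ d → ¬(f a = f c ∧ f b = f d)

/-- For every d-regular graph with d ≥ 2, the star chromatic number is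
at least ⌈(d+4)/2⌉ (= (d+5)/2 in natural division). -/
theorem stmt3 {V : Type*} [Fintype V] [Nonempty V] (G : SimpleGraph V) (d k : ℕ)
    (hd : 2 ≤ d) (hreg : ∀ v : V, (G.neighborSet v).ncard = d)
    (hcol : ∃ f : V → Fin k, IsStarColoring G f) :
    (d + 5) / 2 ≤ k := by
  classical
  obtain ⟨f, hprop, hstar⟩ := hcol
  haveI : DecidableRel G.Adj := fun _ _ => Classical.dec _
  have hdeg : ∀ v : V, (G.neighborFinset v).card = d := by
    intro v
    rw [SimpleGraph.neighborFinset_def, ← Set.ncard_eq_toFinset_card', hreg v]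
  set Nj : V → Fin k → Finset V :=
    fun v j => (G.neighborFinset v).filter (fun w => f w = j) with hNjdef
  have memNj : ∀ (v : V) (j : Fin k) (w : V), w ∈ Nj v j ↔ G.Adj v w ∧ f w = j := by
    intro v j w
    simp [hNjdef, SimpleGraph.mem_neighborFinset]
  -- Claim A : if v has two neighbours of the same colour, the other
  -- neighbours of those two avoid colour f v.
  have claimA : ∀ v a a' x : V, G.Adj v a → G.Adj v a' → a ≠ a' → f a = f a' →
      G.Adj a x → x ≠ v → f x ≠ f v := by
    intro v a a' x hva hva' haa hfa hax hxv hfx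
    have hxa' : x ≠ a' := by
      rintro rfl
      exact hprop hax hfa
    exact hstar hax.symm hva.symm hva' hxv hxa' haa ⟨hfx, hfa⟩
  -- L1 : if v is a "centre" for colour f w (w a neighbour), then v is the
  -- unique f v-coloured neighbour of w.
  have L1 : ∀ v w : V, G.Adj v w → 2 ≤ (Nj v (f w)).card → Nj w (f v) = {v} := by
    intro v w hvw h2
    obtain ⟨w', hw'mem, hw'ne⟩ := Finset.exists_mem_ne h2 w
    rw [memNj] at hw'mem
    ext x
    simp only [Finset.mem_singleton, memNj]
    constructor
    · rintro ⟨hwx, hfx⟩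
      by_contra hxv
      exact claimA v w w' x hvw hw'mem.1 (Ne.symm hw'ne) hw'mem.2.symm hwx hxv hfx
    · rintro rfl
      exact ⟨hvw.symm, rfl⟩
  set S : V → Finset (Fin k) := fun v => Finset.univ.filter (fun j => 2 ≤ (Nj v j).card)
    with hSdef
  set T : V → Finset (Fin k) := fun v => (G.neighborFinset v).image f with hTdef
  set inn : V → ℕ :=
    fun v => ((G.neighborFinset v).filter (fun w => 2 ≤ (Nj v (f w)).card)).card with hinndef
  set out : V → ℕ :=
    fun w => ((G.neighborFinset w).filter (fun v => 2 ≤ (Nj v (f w)).card)).card with houtdef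
  have memT : ∀ (v : V) (j : Fin k), j ∈ T v ↔ ∃ x, G.Adj v x ∧ f x = j := by
    intro v j
    simp [hTdef, SimpleGraph.mem_neighborFinset]
  have hTsub : ∀ v, S v ⊆ T v := by
    intro v j hj
    rw [hSdef] at hj
    simp only [Finset.mem_filter] at hj
    obtain ⟨x, hx⟩ := Finset.card_pos.mp (lt_of_lt_of_le (by norm_num) hj.2)
    rw [memNj] at hx
    exact (memT v j).mpr ⟨x, hx⟩
  -- t v ≤ k - 1, in the form t v + 1 ≤ k
  have hT : ∀ v, (T v).card + 1 ≤ k := by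
    intro v
    have hfv : f v ∉ T v := by
      rw [memT]
      rintro ⟨w, hw, hfw⟩
      exact hprop hw hfw.symm
    have h1 := Finset.card_insert_of_notMem hfv
    calc (T v).card + 1 = (insert (f v) (T v)).card := h1.symm
      _ ≤ (Finset.univ : Finset (Fin k)).card := Finset.card_le_card (Finset.subset_univ _)
      _ = k := by simp
  -- out bound : out w + s w ≤ t w
  have hout : ∀ w, out w + (S w).card ≤ (T w).card := by
    intro w
    set O : Finset V := (G.neighborFinset w).filter (fun v => 2 ≤ (Nj v (f w)).card)
      with hOdef
    have memO : ∀ v, v ∈ O ↔ G.Adj w v ∧ 2 ≤ (Nj v (f w)).card := by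
      intro v
      simp [hOdef, SimpleGraph.mem_neighborFinset]
    have hinj : Set.InjOn f O := by
      intro v hv v' hv' hfvv'
      rw [Finset.mem_coe, memO] at hv hv'
      have e1 := L1 v w hv.1.symm hv.2
      have e2 := L1 v' w hv'.1.symm hv'.2
      rw [hfvv'] at e1
      rw [e2] at e1
      exact (Finset.singleton_injective e1).symm
    have hcardO : (O.image f).card = out w := by
      rw [Finset.card_image_of_injOn hinj, houtdef]
    have hsubO : O.image f ⊆ T w := by
      rw [hTdef, hOdef]
      exact Finset.image_subset_image (Finset.filter_subset _ _)
    have hdisj : Disjoint (O.image f) (S w) := by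
      rw [Finset.disjoint_left]
      intro j hj hjS
      rw [Finset.mem_image] at hj
      obtain ⟨v, hv, rfl⟩ := hj
      rw [memO] at hv
      have e1 := L1 v w hv.1.symm hv.2
      rw [hSdef] at hjS
      simp only [Finset.mem_filter] at hjS
      rw [e1] at hjS
      simp at hjS
    calc out w + (S w).card = (O.image f).card + (S w).card := by rw [hcardO]
      _ = ((O.image f) ∪ S w).card := (Finset.card_union_of_disjoint hdisj).symm
      _ ≤ (T w).card := Finset.card_le_card (Finset.union_subset hsubO (hTsub w))
  -- degree bound : d + s v ≤ t v + inn v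
  have hdegb : ∀ v, d + (S v).card ≤ (T v).card + inn v := by
    intro v
    set R : Finset V := (G.neighborFinset v).filter (fun w => ¬ 2 ≤ (Nj v (f w)).card)
      with hRdef
    have memR : ∀ w, w ∈ R ↔ G.Adj v w ∧ ¬ 2 ≤ (Nj v (f w)).card := by
      intro w
      simp only [hRdef, Finset.mem_filter, SimpleGraph.mem_neighborFinset]
    have hsplit : inn v + R.card = d := by
      rw [hinndef, hRdef, Finset.card_filter_add_card_filter_not, hdeg]
    have hinj : Set.InjOn f R := by
      intro w hw w' hw' hfww'
      rw [Finset.mem_coe, memR] at hw hw'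
      have h1 : (Nj v (f w)).card ≤ 1 := by omega
      have hwm : w ∈ Nj v (f w) := (memNj v (f w) w).mpr ⟨hw.1, rfl⟩
      have hwm' : w' ∈ Nj v (f w) := (memNj v (f w) w').mpr ⟨hw'.1, hfww'.symm⟩
      exact Finset.card_le_one.mp h1 w hwm w' hwm'
    have hcardR : (R.image f).card = R.card := Finset.card_image_of_injOn hinj
    have hsubR : R.image f ⊆ T v := by
      rw [hTdef, hRdef]
      exact Finset.image_subset_image (Finset.filter_subset _ _)
    have hdisj : Disjoint (R.image f) (S v) := by
      rw [Finset.disjoint_left]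
      intro j hj hjS
      rw [Finset.mem_image] at hj
      obtain ⟨w, hw, rfl⟩ := hj
      rw [memR] at hw
      rw [hSdef] at hjS
      simp only [Finset.mem_filter] at hjS
      exact hw.2 hjS.2
    have hRS : R.card + (S v).card ≤ (T v).card := by
      calc R.card + (S v).card = ((R.image f) ∪ S v).card := by
            rw [Finset.card_union_of_disjoint hdisj, hcardR]
        _ ≤ (T v).card := Finset.card_le_card (Finset.union_subset hsubR (hTsub v))
    omega
  -- double counting : ∑ inn = ∑ out
  have hsum : ∑ v : V, inn v = ∑ w : V, out w := by
    have e1 : ∀ v, inn v = ∑ w : V, if G.Adj v w ∧ 2 ≤ (Nj v (f w)).card then 1 else 0 := by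
      intro v
      simp only [hinndef]
      rw [SimpleGraph.neighborFinset_eq_filter, Finset.filter_filter, Finset.card_filter]
    have e2 : ∀ w, out w = ∑ v : V, if G.Adj v w ∧ 2 ≤ (Nj v (f w)).card then 1 else 0 := by
      intro w
      simp only [houtdef]
      rw [SimpleGraph.neighborFinset_eq_filter, Finset.filter_filter, Finset.card_filter]
      apply Finset.sum_congr rfl
      intro v _
      congr 1
      rw [eq_iff_iff]
      constructor
      · rintro ⟨h1, h2⟩; exact ⟨h1.symm, h2⟩
      · rintro ⟨h1, h2⟩; exact ⟨h1.symm, h2⟩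
    calc ∑ v : V, inn v
        = ∑ v : V, ∑ w : V, if G.Adj v w ∧ 2 ≤ (Nj v (f w)).card then 1 else 0 :=
          Finset.sum_congr rfl fun v _ => e1 v
      _ = ∑ w : V, ∑ v : V, if G.Adj v w ∧ 2 ≤ (Nj v (f w)).card then 1 else 0 :=
          Finset.sum_comm
      _ = ∑ w : V, out w := Finset.sum_congr rfl fun w _ => (e2 w).symm
  set n : ℕ := Fintype.card V with hndef
  have hn : 0 < n := Fintype.card_pos
  -- main case split
  by_cases hex : ∃ v : V, (S v).card = 0
  · obtain ⟨v, hv⟩ := hex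
    have hinn0 : inn v = 0 := by
      rw [hinndef, Finset.card_eq_zero, Finset.filter_eq_empty_iff]
      intro w hw h2
      have hmem : f w ∈ S v := by
        rw [hSdef]
        exact Finset.mem_filter.mpr ⟨Finset.mem_univ _, h2⟩
      rw [Finset.card_eq_zero] at hv
      rw [hv] at hmem
      exact absurd hmem (Finset.notMem_empty _)
    have h1 := hdegb v
    have h2 := hT v
    rw [hinn0, hv] at h1
    omega
  · push_neg at hex
    have hex' : ∀ v : V, 1 ≤ (S v).card := fun v => Nat.one_le_iff_ne_zero.mpr (hex v)
    have hA : ∑ v : V, (d + (S v).card) ≤ ∑ v : V, ((T v).card + inn v) :=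
      Finset.sum_le_sum fun v _ => hdegb v
    have hB : ∑ w : V, (out w + (S w).card) ≤ ∑ w : V, (T w).card :=
      Finset.sum_le_sum fun w _ => hout w
    have hC : ∑ v : V, ((T v).card + 1) ≤ ∑ _v : V, k :=
      Finset.sum_le_sum fun v _ => hT v
    have hD : ∑ _v : V, 1 ≤ ∑ v : V, (S v).card := Finset.sum_le_sum fun v _ => hex' v
    simp only [Finset.sum_add_distrib, Finset.sum_const, Finset.card_univ, smul_eq_mul,
      mul_one, ← hndef] at hA hB hC hD
    rw [hsum] at hA
    -- hA : n * d + ∑ S ≤ ∑ T + ∑ out ; hB : ∑ out + ∑ S ≤ ∑ T ;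
    -- hC : ∑ T + n ≤ n * k ; hD : n ≤ ∑ S
    have hfinal : n * (d + 4) ≤ n * (2 * k) := by nlinarith [hA, hB, hC, hD]
    have := Nat.le_of_mul_le_mul_left hfinal hn
    omega
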